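/- For every finite simple graph on n ≥ 2 vertices with m edges and vertex degrees k_1, …, k_n, one has n(n−1)·∑_{i=1}^n k_i² − (n−1)·(2m)² ≤ n·m·(n(n−1) − 2m). -/

import Mathlib

theorem normDegVar_le_one_div_free (n : ℕ) (hn : 2 ≤ n) (G : SimpleGraph (Fin n))
    [DecidableRel G.Adj] (m : ℕ) (hm : m = G.edgeFinset.card) :
    (n : ℝ) * ((n : ℝ) - 1) * ∑ i, (G.degree i : ℝ) ^ 2
        - ((n : ℝ) - 1) * (2 * (m : ℝ)) ^ 2
      ≤ (n : ℝ) * (m : ℝ) * ((n : ℝ) * ((n : ℝ) - 1) - 2 * (m : ℝ)) := by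
  classical
  have hn2 : (2:ℝ) ≤ (n:ℝ) := by exact_mod_cast hn
  set N : ℝ := (n:ℝ) * ((n:ℝ) - 1) with hN
  set x : Fin n → Fin n → ℝ := fun i j => if G.Adj i j then 1 else 0 with hx
  set z : Fin n → Fin n → ℝ := fun i j => if i = j then 0 else 1 with hz
  set y : Fin n → Fin n → ℝ := fun i j => N * x i j - 2*(m:ℝ) * z i j with hy
  set s : Fin n → ℝ := fun i => ∑ j, y i j with hs
  set Q2 : ℝ := ∑ i, ∑ j, (y i j)^2 with hQ2def
  set V : ℝ := ∑ i, (s i)^2 with hVdef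
  -- pointwise facts
  have hxd : ∀ i, x i i = 0 := fun i => by simp [hx]
  have hxs : ∀ i j, x i j = x j i := fun i j => by
    simp only [hx]
    by_cases h : G.Adj i j
    · simp [h, h.symm]
    · have h2 : ¬ G.Adj j i := fun hh => h hh.symm
      simp [h, h2]
  have hzd : ∀ i, z i i = 0 := fun i => by simp [hz]
  have hzs : ∀ i j, z i j = z j i := fun i j => by
    simp only [hz]; by_cases h : i = j <;> simp [h, eq_comm]
  have hyd : ∀ i, y i i = 0 := fun i => by simp [hy, hxd i, hzd i]
  have hys : ∀ i j, y i j = y j i := fun i j => by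
    simp only [hy, hxs i j, hzs i j]
  -- row sums
  have hxsum : ∀ i, ∑ j, x i j = (G.degree i : ℝ) := by
    intro i
    rw [hx]; rw [Finset.sum_boole]
    congr 1
    rw [SimpleGraph.degree]; congr 1; ext v; simp
  have hzsum : ∀ i, ∑ j, z i j = (n:ℝ) - 1 := by
    intro i
    have h1 : ∀ j, z i j = 1 - (if i = j then (1:ℝ) else 0) := by
      intro j; by_cases h : i = j <;> simp [hz, h]
    simp_rw [h1]
    rw [Finset.sum_sub_distrib, Finset.sum_const, Finset.card_univ, Fintype.card_fin,
      Finset.sum_ite_eq]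
    simp
  have hA : ∑ i, (G.degree i : ℝ) = 2*(m:ℝ) := by
    rw [← Nat.cast_sum, G.sum_degrees_eq_twice_card_edges, ← hm]
    push_cast; ring
  have hssum : ∀ i, s i = N * (G.degree i : ℝ) - 2*(m:ℝ)*((n:ℝ)-1) := by
    intro i
    rw [hs]
    simp only [hy]
    rw [Finset.sum_sub_distrib, ← Finset.mul_sum, ← Finset.mul_sum, hxsum i, hzsum i]
  have hstot : ∑ i, s i = 0 := by
    simp_rw [hssum]
    rw [Finset.sum_sub_distrib, ← Finset.mul_sum, hA, Finset.sum_const, Finset.card_univ,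
      Fintype.card_fin, nsmul_eq_mul]
    rw [hN]; push_cast; ring
  have hcol : ∀ j, ∑ i, y i j = s j := by
    intro j
    rw [hs]
    exact Finset.sum_congr rfl fun i _ => hys i j
  -- Q2 value
  have hysq : ∀ i j, (y i j)^2 = (N^2 - 4*N*(m:ℝ)) * x i j + 4*(m:ℝ)^2 * z i j := by
    intro i j
    by_cases h : i = j
    · subst h; rw [hyd i, hxd i, hzd i]; ring
    · have hz1 : z i j = 1 := by simp [hz, h]
      by_cases ha : G.Adj i j
      · have hx1 : x i j = 1 := by simp [hx, ha]
        simp only [hy, hx1, hz1]; ring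
      · have hx0 : x i j = 0 := by simp [hx, ha]
        simp only [hy, hx0, hz1]; ring
  have hQ2 : Q2 = 2*(m:ℝ)*N*(N - 2*(m:ℝ)) := by
    rw [hQ2def]
    simp_rw [hysq, Finset.sum_add_distrib, ← Finset.mul_sum, hxsum, hzsum]
    rw [hA, Finset.sum_const, Finset.card_univ, Fintype.card_fin, nsmul_eq_mul]
    rw [hN]; push_cast; ring
  -- nonnegativity
  have hQ0 : 0 ≤ Q2 := by
    rw [hQ2def]
    exact Finset.sum_nonneg fun i _ => Finset.sum_nonneg fun j _ => sq_nonneg _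
  have hV0 : 0 ≤ V := by
    rw [hVdef]
    exact Finset.sum_nonneg fun i _ => sq_nonneg _
  -- the SOS expansion
  have hpoint : ∀ i j, z i j * (s i + s j - (n:ℝ) * y i j)^2
      = z i j * (s i)^2 + z i j * (s j)^2 + 2*(z i j * (s i * s j))
        - 2*(n:ℝ)*(s i * y i j) - 2*(n:ℝ)*(s j * y i j) + (n:ℝ)^2 * (y i j)^2 := by
    intro i j
    by_cases h : i = j
    · subst h; rw [hzd i, hyd i]; ring
    · have hz1 : z i j = 1 := by simp [hz, h]
      rw [hz1]; ring
  have hE1 : ∑ i, ∑ j, z i j * (s i)^2 = ((n:ℝ)-1) * V := by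
    have h1 : ∀ i, ∑ j, z i j * (s i)^2 = ((n:ℝ)-1) * (s i)^2 := by
      intro i; rw [← Finset.sum_mul, hzsum i]
    simp_rw [h1]
    rw [← Finset.mul_sum, hVdef]
  have hE2 : ∑ i, ∑ j, z i j * (s j)^2 = ((n:ℝ)-1) * V := by
    rw [Finset.sum_comm]
    have h1 : ∀ j, ∑ i, z i j * (s j)^2 = ((n:ℝ)-1) * (s j)^2 := by
      intro j
      have : ∑ i, z i j = (n:ℝ) - 1 := by
        rw [← hzsum j]; exact Finset.sum_congr rfl fun i _ => hzs i j
      rw [← Finset.sum_mul, this]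
    simp_rw [h1]
    rw [← Finset.mul_sum, hVdef]
  have hE3 : ∑ i, ∑ j, z i j * (s i * s j) = -V := by
    have h1 : ∀ i, ∑ j, z i j * (s i * s j) = s i * (∑ j, s j) - s i * s i := by
      intro i
      have h2 : ∀ j, z i j * (s i * s j) = s i * s j - (if j = i then s i * s j else 0) := by
        intro j
        by_cases h : j = i
        · subst h; rw [hzd j]; simp
        · have hij : ¬ i = j := fun hh => h hh.symm
          have : z i j = 1 := by simp [hz, hij]
          simp [h, this]
      simp_rw [h2]
      rw [Finset.sum_sub_distrib, Finset.sum_ite_eq', ← Finset.mul_sum]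
      simp
    simp_rw [h1, hstot]
    rw [Finset.sum_sub_distrib]
    simp [hVdef, pow_two]
  have hE4 : ∑ i, s i * ∑ j, y i j = V := by
    have h1 : ∀ i, s i * ∑ j, y i j = s i * s i := by
      intro i
      congr 1
    simp_rw [h1]
    rw [hVdef]
    exact Finset.sum_congr rfl fun i _ => (pow_two (s i)).symm
  have hE5 : ∑ i, ∑ j, s j * y i j = V := by
    rw [Finset.sum_comm]
    have h1 : ∀ j, ∑ i, s j * y i j = s j * s j := by
      intro j; rw [← Finset.mul_sum, hcol j]
    simp_rw [h1]
    rw [hVdef]; simp [pow_two]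
  have hT0 : (0:ℝ) ≤ ∑ i, ∑ j, z i j * (s i + s j - (n:ℝ) * y i j)^2 := by
    refine Finset.sum_nonneg fun i _ => Finset.sum_nonneg fun j _ => mul_nonneg ?_ (sq_nonneg _)
    by_cases h : i = j <;> simp [hz, h]
  have hTexp : ∑ i, ∑ j, z i j * (s i + s j - (n:ℝ) * y i j)^2
      = 2*((n:ℝ)-1)*V + 2*(-V) - 4*(n:ℝ)*V + (n:ℝ)^2 * Q2 := by
    simp_rw [hpoint]
    simp only [Finset.sum_add_distrib, Finset.sum_sub_distrib]
    simp only [← Finset.mul_sum]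
    rw [hE1, hE2, hE3, hE4, hE5, ← hQ2def]
    ring
  have hVQ : 2*V ≤ (n:ℝ)*Q2 := by
    rw [hTexp] at hT0
    nlinarith [hT0, hV0, hQ0, hn2]
  -- value of V in terms of degrees
  have hVval : V = N^2 * (∑ i, (G.degree i : ℝ)^2)
      - 2*N*(2*(m:ℝ)*((n:ℝ)-1))*(2*(m:ℝ)) + (n:ℝ)*(2*(m:ℝ)*((n:ℝ)-1))^2 := by
    rw [hVdef]
    simp_rw [hssum]
    have h1 : ∀ i, (N * (G.degree i : ℝ) - 2*(m:ℝ)*((n:ℝ)-1))^2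
        = N^2 * (G.degree i : ℝ)^2 - (2*N*(2*(m:ℝ)*((n:ℝ)-1))) * (G.degree i : ℝ)
          + (2*(m:ℝ)*((n:ℝ)-1))^2 := fun i => by ring
    simp_rw [h1]
    rw [Finset.sum_add_distrib, Finset.sum_sub_distrib, ← Finset.mul_sum, ← Finset.mul_sum,
      hA, Finset.sum_const, Finset.card_univ, Fintype.card_fin, nsmul_eq_mul]
  -- finish
  have hNpos : (0:ℝ) < N := by rw [hN]; nlinarith
  rw [← mul_le_mul_iff_of_pos_left hNpos]
  calc N * ((n : ℝ) * ((n : ℝ) - 1) * ∑ i, (G.degree i : ℝ) ^ 2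
        - ((n : ℝ) - 1) * (2 * (m : ℝ)) ^ 2) = V := by
        rw [hVval, hN]; ring
    _ ≤ ((n:ℝ)/2) * Q2 := by linarith
    _ = N * ((n : ℝ) * (m : ℝ) * ((n : ℝ) * ((n : ℝ) - 1) - 2 * (m : ℝ))) := by
        rw [hQ2, hN]; ring
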